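/- arXiv:2011.07916 — 2 statements merged into one kernel-verified Lean document; each statement's English description precedes it below -/
import Mathlib

section
/- If A is an n×n real matrix with all entries strictly positive, then there exists exactly one (up to positive scaling) eigenvector α of A with all components strictly positive, and its associated eigenvalue λ is the spectral radius of A. -/
open Finset Matrix

lemma pf_mulVec_pos {n : ℕ} (A : Matrix (Fin n) (Fin n) ℝ) (hA : ∀ i j, 0 < A i j)
    {w : Fin n → ℝ} (hw : ∀ i, 0 ≤ w i) (hw' : ∃ j, 0 < w j) (i : Fin n) :
    0 < A.mulVec w i := by
  obtain ⟨j, hj⟩ := hw'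
  have h1 : 0 < A i j * w j := mul_pos (hA i j) hj
  have h2 : A i j * w j ≤ ∑ k, A i k * w k :=
    Finset.single_le_sum (fun k _ => mul_nonneg (hA i k).le (hw k)) (mem_univ j)
  simpa [Matrix.mulVec, dotProduct] using h1.trans_le h2

lemma pf_exists_pos_eigen {n : ℕ} (hn : 0 < n) (A : Matrix (Fin n) (Fin n) ℝ)
    (hA : ∀ i j, 0 < A i j) :
    ∃ (α : Fin n → ℝ) (lam : ℝ), (∀ i, 0 < α i) ∧ 0 < lam ∧ A.mulVec α = lam • α := by
  haveI : Nonempty (Fin n) := ⟨⟨0, hn⟩⟩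
  set B : ℝ := ∑ i, ∑ j, A i j with hB
  have hB_entry : ∀ i j, A i j ≤ B := by
    intro i j
    calc A i j ≤ ∑ k, A i k := Finset.single_le_sum (fun k _ => (hA i k).le) (mem_univ j)
    _ ≤ B := Finset.single_le_sum (fun k _ => Finset.sum_nonneg fun l _ => (hA k l).le) (mem_univ i)
  have hBpos : 0 < B := (hA ⟨0,hn⟩ ⟨0,hn⟩).trans_le (hB_entry _ _)
  -- row-sum bound on simplex
  have hrow : ∀ (x : Fin n → ℝ), x ∈ stdSimplex ℝ (Fin n) → ∀ i, A.mulVec x i ≤ B := by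
    intro x hx i
    have : ∑ j, A i j * x j ≤ ∑ j, B * x j :=
      Finset.sum_le_sum fun j _ => mul_le_mul_of_nonneg_right (hB_entry i j) (hx.1 j)
    calc A.mulVec x i = ∑ j, A i j * x j := by simp [Matrix.mulVec, dotProduct]
    _ ≤ ∑ j, B * x j := this
    _ = B := by rw [← Finset.mul_sum, hx.2, mul_one]
  set x₀ : Fin n → ℝ := fun _ => (n : ℝ)⁻¹ with hx₀
  have hnR : (0:ℝ) < n := Nat.cast_pos.mpr hn
  have hx₀Δ : x₀ ∈ stdSimplex ℝ (Fin n) := by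
    constructor
    · intro i; positivity
    · simp [hx₀, Finset.sum_const, mul_comm]
      field_simp
  set c : ℝ := univ.inf' univ_nonempty (fun i => A.mulVec x₀ i) with hc
  have hc_le : ∀ i, c ≤ A.mulVec x₀ i := fun i => inf'_le _ (mem_univ i)
  have hc_pos : 0 < c := by
    rw [hc, lt_inf'_iff]
    intro i _
    exact pf_mulVec_pos A hA (fun i => hx₀Δ.1 i) ⟨⟨0,hn⟩, by positivity⟩ i
  set T : ℝ := n * B with hT
  set S : Set (ℝ × (Fin n → ℝ)) :=
    (Set.Icc c T ×ˢ stdSimplex ℝ (Fin n)) ∩ {p | ∀ i, p.1 * p.2 i ≤ A.mulVec p.2 i} with hS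
  have hSclosed : IsClosed S := by
    apply IsClosed.inter (isClosed_Icc.prod (isClosed_stdSimplex _ _))
    rw [Set.setOf_forall]
    refine isClosed_iInter fun i => isClosed_le ?_ ?_
    · exact (continuous_fst.mul ((continuous_apply i).comp continuous_snd))
    · exact (continuous_apply i).comp (continuous_const.matrix_mulVec continuous_snd)
  have hScompact : IsCompact S :=
    ((isCompact_Icc.prod (isCompact_stdSimplex _ _)).inter_right
      (by
        rw [Set.setOf_forall]
        refine isClosed_iInter fun i => isClosed_le ?_ ?_
        · exact (continuous_fst.mul ((continuous_apply i).comp continuous_snd))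
        · exact (continuous_apply i).comp (continuous_const.matrix_mulVec continuous_snd)))
  have hcT : c ≤ T := by
    have h1 : c ≤ B := (hc_le ⟨0,hn⟩).trans (hrow x₀ hx₀Δ _)
    have : (1:ℝ) ≤ n := by exact_mod_cast hn
    nlinarith
  have hSne : S.Nonempty := by
    refine ⟨(c, x₀), ⟨⟨le_refl c, hcT⟩, hx₀Δ⟩, fun i => ?_⟩
    have h1 : (n:ℝ)⁻¹ ≤ 1 := by
      rw [inv_le_one_iff₀]; right; exact_mod_cast hn
    calc c * x₀ i ≤ c * 1 := mul_le_mul_of_nonneg_left h1 hc_pos.le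
    _ = c := mul_one c
    _ ≤ A.mulVec x₀ i := hc_le i
  have hImg : IsCompact (Prod.fst '' S) := hScompact.image continuous_fst
  set lam : ℝ := sSup (Prod.fst '' S) with hlam
  have hlam_mem : lam ∈ Prod.fst '' S := hImg.sSup_mem (hSne.image _)
  obtain ⟨p, hpS, hp1⟩ := hlam_mem
  set x : Fin n → ℝ := p.2 with hx
  have hxΔ : x ∈ stdSimplex ℝ (Fin n) := hpS.1.2
  have hlam_Icc : lam ∈ Set.Icc c T := hp1 ▸ hpS.1.1
  have hlam_pos : 0 < lam := hc_pos.trans_le hlam_Icc.1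
  have hlam_le : ∀ i, lam * x i ≤ A.mulVec x i := fun i => hp1 ▸ hpS.2 i
  -- x has a positive coordinate
  have hx_ex : ∃ j, 0 < x j := by
    by_contra h
    push_neg at h
    have h0 : ∀ j, x j = 0 := fun j => le_antisymm (h j) (hxΔ.1 j)
    have h2 := hxΔ.2
    rw [Finset.sum_eq_zero (fun j _ => h0 j)] at h2
    exact one_ne_zero h2.symm
  -- A x is positive
  have hz_pos : ∀ i, 0 < A.mulVec x i := pf_mulVec_pos A hA (fun i => hxΔ.1 i) hx_ex
  -- claim equality
  have heq : A.mulVec x = lam • x := by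
    by_contra hne
    set y : Fin n → ℝ := A.mulVec x - lam • x with hy
    have hy_nonneg : ∀ i, 0 ≤ y i := by
      intro i; simp [hy]; linarith [hlam_le i, mul_comm lam (x i)]
    have hy_ne : ∃ j, 0 < y j := by
      by_contra h
      push_neg at h
      have : ∀ j, y j = 0 := fun j => le_antisymm (h j) (hy_nonneg j)
      apply hne
      funext i
      have h2 := this i
      simp only [hy, Pi.sub_apply, Pi.smul_apply, smul_eq_mul] at h2
      simp only [Pi.smul_apply, smul_eq_mul]
      linarith
    set z : Fin n → ℝ := A.mulVec x with hz
    have hAy_pos : ∀ i, 0 < A.mulVec y i := pf_mulVec_pos A hA hy_nonneg hy_ne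
    set ε : ℝ := univ.inf' univ_nonempty (fun i => A.mulVec y i / z i) with hε
    have hε_pos : 0 < ε := by
      rw [hε, lt_inf'_iff]
      intro i _
      exact div_pos (hAy_pos i) (hz_pos i)
    have hε_le : ∀ i, ε * z i ≤ A.mulVec y i := by
      intro i
      have h1 : ε ≤ A.mulVec y i / z i := inf'_le _ (mem_univ i)
      calc ε * z i ≤ (A.mulVec y i / z i) * z i := mul_le_mul_of_nonneg_right h1 (hz_pos i).le
      _ = A.mulVec y i := div_mul_cancel₀ _ (hz_pos i).ne'
    -- A z ≥ (lam + ε) z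
    have hAz : ∀ i, (lam + ε) * z i ≤ A.mulVec z i := by
      intro i
      have hzyx : z = y + lam • x := by
        funext k
        simp only [hy, Pi.add_apply, Pi.sub_apply, Pi.smul_apply, smul_eq_mul]
        ring
      have h1 : A.mulVec z i = A.mulVec y i + lam * z i := by
        conv_lhs => rw [hzyx]
        rw [Matrix.mulVec_add, Matrix.mulVec_smul]
        simp only [Pi.add_apply, Pi.smul_apply, smul_eq_mul, hz]
      rw [h1]
      have h2 := hε_le i
      linarith
    -- normalize z
    set s : ℝ := ∑ i, z i with hs
    have hs_pos : 0 < s := Finset.sum_pos (fun i _ => hz_pos i) univ_nonempty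
    set z' : Fin n → ℝ := s⁻¹ • z with hz'
    have hz'Δ : z' ∈ stdSimplex ℝ (Fin n) := by
      constructor
      · intro i
        exact mul_nonneg (inv_nonneg.mpr hs_pos.le) (hz_pos i).le
      · simp [hz', ← Finset.mul_sum, ← hs, inv_mul_cancel₀ hs_pos.ne']
    have hz'_le : ∀ i, (lam + ε) * z' i ≤ A.mulVec z' i := by
      intro i
      have h1 : A.mulVec z' i = s⁻¹ * A.mulVec z i := by
        simp [hz', Matrix.mulVec_smul]
      rw [h1]
      have h2 := hAz i
      have h3 : (lam + ε) * z' i = s⁻¹ * ((lam + ε) * z i) := by simp [hz']; ring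
      rw [h3]
      exact mul_le_mul_of_nonneg_left h2 (inv_nonneg.mpr hs_pos.le)
    -- upper bound lam + ε ≤ T
    have hub : lam + ε ≤ T := by
      obtain ⟨i0, hi0⟩ : ∃ i0, (n:ℝ)⁻¹ ≤ z' i0 := by
        by_contra h
        push_neg at h
        have h1 : ∑ i, z' i < ∑ _i : Fin n, (n:ℝ)⁻¹ :=
          Finset.sum_lt_sum_of_nonempty univ_nonempty (fun i _ => h i)
        rw [hz'Δ.2] at h1
        simp [Finset.sum_const] at h1
        rw [mul_inv_cancel₀ (ne_of_gt hnR)] at h1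
        exact absurd h1 (lt_irrefl 1)
      have h1 : (lam + ε) * (n:ℝ)⁻¹ ≤ B := by
        calc (lam + ε) * (n:ℝ)⁻¹ ≤ (lam + ε) * z' i0 :=
              mul_le_mul_of_nonneg_left hi0 (by positivity)
        _ ≤ A.mulVec z' i0 := hz'_le i0
        _ ≤ B := hrow z' hz'Δ i0
      rw [hT]
      calc lam + ε = ((lam + ε) * (n:ℝ)⁻¹) * n := by field_simp
      _ ≤ B * n := mul_le_mul_of_nonneg_right h1 hnR.le
      _ = n * B := mul_comm _ _
    have hmem : (lam + ε, z') ∈ S := by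
      refine ⟨⟨⟨?_, hub⟩, hz'Δ⟩, hz'_le⟩
      show c ≤ lam + ε
      have := hlam_Icc.1
      linarith
    have hbdd : BddAbove (Prod.fst '' S) := hImg.bddAbove
    have : lam + ε ≤ lam := le_csSup hbdd ⟨(lam + ε, z'), hmem, rfl⟩
    linarith
  -- positivity of x
  have hx_pos : ∀ i, 0 < x i := by
    intro i
    have h1 : A.mulVec x i = lam * x i := by
      rw [heq]; simp [Pi.smul_apply, smul_eq_mul]
    have h2 := hz_pos i
    rw [h1] at h2
    rcases (hxΔ.1 i).lt_or_eq with h | h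
    · exact h
    · exfalso; rw [← h] at h2; simp at h2
  exact ⟨x, lam, hx_pos, hlam_pos, heq⟩


/-- Perron–Frobenius theorem for strictly positive matrices: there is exactly one
(up to positive scaling) strictly positive eigenvector, and its eigenvalue is the
spectral radius (it dominates the modulus of every complex eigenvalue). -/
theorem perron_frobenius_positive_matrix {n : ℕ} (hn : 0 < n)
    (A : Matrix (Fin n) (Fin n) ℝ) (hA : ∀ i j, 0 < A i j) :
    ∃ (α : Fin n → ℝ) (lam : ℝ),
      (∀ i, 0 < α i) ∧ A.mulVec α = lam • α ∧
      (∀ (β : Fin n → ℝ) (μ : ℝ), (∀ i, 0 < β i) → A.mulVec β = μ • β →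
        μ = lam ∧ ∃ c : ℝ, 0 < c ∧ β = c • α) ∧
      (∀ (μ : ℂ) (v : Fin n → ℂ), v ≠ 0 →
        (A.map (fun x => (x : ℂ))).mulVec v = μ • v → ‖μ‖ ≤ lam) := by
  haveI : Nonempty (Fin n) := ⟨⟨0, hn⟩⟩
  obtain ⟨α, lam, hα, hlam_pos, hEig⟩ := pf_exists_pos_eigen hn A hA
  obtain ⟨y, lam2, hy, hlam2_pos, hEig2⟩ := pf_exists_pos_eigen hn Aᵀ (fun i j => hA j i)
  -- pairing identity
  have hpair : ∀ (w : Fin n → ℝ),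
      dotProduct y (A.mulVec w) = lam2 * dotProduct y w := by
    intro w
    rw [Matrix.dotProduct_mulVec, ← Matrix.mulVec_transpose, hEig2,
      smul_dotProduct, smul_eq_mul]
  have hdotpos : ∀ (w : Fin n → ℝ), (∀ i, 0 ≤ w i) → (∃ j, 0 < w j) →
      0 < dotProduct y w := by
    intro w hw ⟨j, hj⟩
    have h1 : 0 < y j * w j := mul_pos (hy j) hj
    have h2 : y j * w j ≤ ∑ k, y k * w k :=
      Finset.single_le_sum (fun k _ => mul_nonneg (hy k).le (hw k)) (mem_univ j)
    exact h1.trans_le h2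
  have hlam2 : lam2 = lam := by
    have h1 := hpair α
    rw [hEig, dotProduct_smul, smul_eq_mul] at h1
    have h2 : 0 < dotProduct y α := hdotpos α (fun i => (hα i).le) ⟨⟨0,hn⟩, hα _⟩
    exact (mul_right_cancel₀ h2.ne' h1.symm)
  -- eigenvalue equality for proportional vectors
  have heq_of_prop : ∀ (β : Fin n → ℝ) (μ c : ℝ), 0 < c → (∀ i, 0 < β i) →
      A.mulVec β = μ • β → β = c • α → μ = lam := by
    intro β μ c hc hβ hEβ hprop
    have h1 : A.mulVec β = lam • β := by
      rw [hprop, Matrix.mulVec_smul, hEig, smul_comm]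
    rw [hEβ] at h1
    have h2 := congrFun h1 ⟨0, hn⟩
    simp only [Pi.smul_apply, smul_eq_mul] at h2
    exact mul_right_cancel₀ (hβ ⟨0,hn⟩).ne' h2
  -- key comparison lemma
  have key : ∀ (β γ : Fin n → ℝ) (μ ν : ℝ), (∀ i, 0 < β i) → (∀ i, 0 < γ i) →
      A.mulVec β = μ • β → A.mulVec γ = ν • γ →
      (∃ c : ℝ, 0 < c ∧ β = c • γ) ∨ ν < μ := by
    intro β γ μ ν hβ hγ hEβ hEγ
    set c : ℝ := univ.inf' univ_nonempty (fun i => β i / γ i) with hc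
    have hc_pos : 0 < c := by
      rw [hc, lt_inf'_iff]
      exact fun i _ => div_pos (hβ i) (hγ i)
    obtain ⟨i0, _, hi0⟩ := exists_mem_eq_inf' (univ_nonempty) (fun i => β i / γ i)
    have hd_nonneg : ∀ i, 0 ≤ β i - c * γ i := by
      intro i
      have h1 : c ≤ β i / γ i := inf'_le _ (mem_univ i)
      have h2 : c * γ i ≤ (β i / γ i) * γ i := mul_le_mul_of_nonneg_right h1 (hγ i).le
      rw [div_mul_cancel₀ _ (hγ i).ne'] at h2
      linarith
    have hd_i0 : β i0 - c * γ i0 = 0 := by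
      have : c = β i0 / γ i0 := by rw [hc, hi0]
      rw [this, div_mul_cancel₀ _ (hγ i0).ne']
      ring
    by_cases hd : β = c • γ
    · exact Or.inl ⟨c, hc_pos, hd⟩
    · right
      set d : Fin n → ℝ := β - c • γ with hdd
      have hd_ne : ∃ j, 0 < d j := by
        by_contra h
        push_neg at h
        apply hd
        funext i
        have h2 := le_antisymm (h i) (by simpa [hdd, Pi.sub_apply, Pi.smul_apply, smul_eq_mul] using hd_nonneg i)
        simp only [hdd, Pi.sub_apply, Pi.smul_apply, smul_eq_mul] at h2
        simp only [Pi.smul_apply, smul_eq_mul]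
        linarith
      have hAd_pos : 0 < A.mulVec d i0 :=
        pf_mulVec_pos A hA (fun i => by simpa [hdd, Pi.sub_apply, Pi.smul_apply, smul_eq_mul] using hd_nonneg i) hd_ne i0
      have h1 : A.mulVec d i0 = μ * β i0 - ν * (c * γ i0) := by
        rw [hdd, Matrix.mulVec_sub, Matrix.mulVec_smul, hEβ, hEγ]
        simp only [Pi.sub_apply, Pi.smul_apply, smul_eq_mul]
        ring
      have h2 : β i0 = c * γ i0 := by linarith [hd_i0]
      rw [h1, h2] at hAd_pos
      have h3 : 0 < (μ - ν) * (c * γ i0) := by ring_nf; ring_nf at hAd_pos; linarith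
      have h4 : 0 < c * γ i0 := mul_pos hc_pos (hγ i0)
      nlinarith
  refine ⟨α, lam, hα, hEig, ?_, ?_⟩
  · -- uniqueness
    intro β μ hβ hEβ
    rcases key β α μ lam hβ hα hEβ hEig with ⟨c, hc, hprop⟩ | hgt
    · exact ⟨heq_of_prop β μ c hc hβ hEβ hprop, c, hc, hprop⟩
    · rcases key α β lam μ hα hβ hEig hEβ with ⟨c', hc', hprop'⟩ | hgt'
      · have hβprop : β = c'⁻¹ • α := by
          rw [hprop', smul_smul, inv_mul_cancel₀ hc'.ne', one_smul]
        have := heq_of_prop β μ c'⁻¹ (inv_pos.mpr hc') hβ hEβ hβprop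
        exact ⟨this, c'⁻¹, inv_pos.mpr hc', hβprop⟩
      · exact absurd hgt' (by linarith)
  · -- spectral radius
    intro μ v hv hEv
    set w : Fin n → ℝ := fun i => ‖v i‖ with hw
    have hw_nonneg : ∀ i, 0 ≤ w i := fun i => norm_nonneg _
    have hw_ex : ∃ j, 0 < w j := by
      by_contra h
      push_neg at h
      apply hv
      funext i
      exact norm_eq_zero.mp (le_antisymm (h i) (norm_nonneg _))
    have hbound : ∀ i, ‖μ‖ * w i ≤ A.mulVec w i := by
      intro i
      have h1 : ((A.map (fun x => (x : ℂ))).mulVec v) i = μ * v i := by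
        rw [hEv]; simp [Pi.smul_apply, smul_eq_mul]
      have h4 : ((A.map (fun x => (x : ℂ))).mulVec v) i = ∑ j, (A i j : ℂ) * v j := by
        simp [Matrix.mulVec, dotProduct, Matrix.map_apply]
      calc ‖μ‖ * w i = ‖μ * v i‖ := (norm_mul _ _).symm
      _ = ‖∑ j, (A i j : ℂ) * v j‖ := by rw [← h1, h4]
      _ ≤ ∑ j, ‖(A i j : ℂ) * v j‖ := norm_sum_le _ _
      _ = ∑ j, A i j * w j := by
          refine Finset.sum_congr rfl fun j _ => ?_
          rw [norm_mul, Complex.norm_real, Real.norm_eq_abs, abs_of_pos (hA i j)]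
      _ = A.mulVec w i := by simp [Matrix.mulVec, dotProduct]
    have h5 : ‖μ‖ * dotProduct y w ≤ lam * dotProduct y w := by
      have h6 : dotProduct y (A.mulVec w) = lam * dotProduct y w := by
        rw [hpair w, hlam2]
      have h7 : ‖μ‖ * dotProduct y w ≤ dotProduct y (A.mulVec w) := by
        rw [dotProduct, Finset.mul_sum]
        refine Finset.sum_le_sum fun i _ => ?_
        calc ‖μ‖ * (y i * w i) = y i * (‖μ‖ * w i) := by ring
        _ ≤ y i * A.mulVec w i := mul_le_mul_of_nonneg_left (hbound i) (hy i).le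
      linarith [h6 ▸ h7]
    have h8 : 0 < dotProduct y w := hdotpos w hw_nonneg hw_ex
    exact le_of_mul_le_mul_right (by linarith) h8
end

section
/- Let M be a strictly positive n×n diagonalizable matrix with eigenvalues λ₁ > |λ₂| ≥ … ≥ |λₙ| and unit Perron eigenvector α. Then the spectral radius of J = (M − α αᵀ M)/λ₁ is at most |λ₂|/λ₁ < 1. -/
open Matrix Finset in
/-- For a strictly positive diagonalizable matrix `M` with eigenvalues
`λ₁ > |λ₂| ≥ … ≥ |λₙ|` and unit Perron eigenvector `α`, the spectral radius of
`J = (M − α αᵀ M)/λ₁` is at most `|λ₂|/λ₁ < 1`: every complex eigenvalue `μ` of `J`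
satisfies `‖μ‖ ≤ |λ₂|/λ₁`. -/
theorem jacobian_spectral_radius_lt_one {n : ℕ}
    (M : Matrix (Fin (n + 2)) (Fin (n + 2)) ℝ) (hM : ∀ i j, 0 < M i j)
    (lamc : Fin (n + 2) → ℂ) (u : Fin (n + 2) → Fin (n + 2) → ℂ)
    (hbasis : LinearIndependent ℂ u)
    (heig : ∀ i, (M.map (fun x => (x : ℂ))).mulVec (u i) = lamc i • u i)
    (lam1 : ℝ) (hlam1 : 0 < lam1) (hlamc0 : lamc 0 = (lam1 : ℂ))
    (hdom : ∀ i : Fin (n + 2), i ≠ 0 → ‖lamc i‖ ≤ ‖lamc 1‖)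
    (hgap : ‖lamc 1‖ < lam1)
    (horder : ∀ i j : Fin (n + 2), i ≠ 0 → i ≤ j → ‖lamc j‖ ≤ ‖lamc i‖)
    (α : Fin (n + 2) → ℝ) (hαpos : ∀ i, 0 < α i)
    (hα : M.mulVec α = lam1 • α) (hαnorm : ∑ i, α i ^ 2 = 1) :
    (∀ (μ : ℂ) (v : Fin (n + 2) → ℂ), v ≠ 0 →
        (((lam1⁻¹ • (M - Matrix.vecMulVec α α * M))).map
            (fun x => (x : ℂ))).mulVec v = μ • v →
        ‖μ‖ ≤ ‖lamc 1‖ / lam1)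
    ∧ ‖lamc 1‖ / lam1 < 1 := by
  have hlam1' : (lam1 : ℂ) ≠ 0 := by exact_mod_cast hlam1.ne'
  set Mc : Matrix (Fin (n+2)) (Fin (n+2)) ℂ := M.map (fun x => (x:ℂ)) with hMc
  set αc : Fin (n+2) → ℂ := fun i => (α i : ℂ) with hαc
  have hcard : Fintype.card (Fin (n+2)) = Module.finrank ℂ (Fin (n+2) → ℂ) := by simp
  set B := basisOfLinearIndependentOfCardEqFinrank hbasis hcard with hBdef
  have hB : ∀ i, B i = u i := fun i =>
    congrFun (coe_basisOfLinearIndependentOfCardEqFinrank hbasis hcard) i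
  -- complexified eigen equation for α
  have hαeig : Mc.mulVec αc = (lam1:ℂ) • αc := by
    funext i
    have h1 := congrFun hα i
    simp only [Matrix.mulVec, dotProduct, Pi.smul_apply, smul_eq_mul] at h1 ⊢
    simp only [hMc, Matrix.map_apply, hαc]
    exact_mod_cast congrArg Complex.ofReal h1
  -- α in the basis
  set a : Fin (n+2) → ℂ := fun i => B.repr αc i with ha
  have hαsum : αc = ∑ i, a i • u i := by
    conv_lhs => rw [← B.sum_repr αc]
    exact Finset.sum_congr rfl fun i _ => by rw [hB]
  have haeq : ∀ j, lamc j * a j = (lam1:ℂ) * a j := by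
    intro j
    have h1 : Mc.mulVec αc = ∑ i, (lamc i * a i) • u i := by
      rw [hαsum, ← Matrix.mulVecLin_apply, map_sum]
      refine Finset.sum_congr rfl fun i _ => ?_
      rw [LinearMap.map_smul, Matrix.mulVecLin_apply, heig, smul_smul, mul_comm]
    have h2 : Mc.mulVec αc = ∑ i, ((lam1:ℂ) * a i) • u i := by
      rw [hαeig, hαsum, Finset.smul_sum]
      exact Finset.sum_congr rfl fun i _ => by rw [smul_smul]
    have h3 : ∑ i, (lamc i * a i) • B i = ∑ i, ((lam1:ℂ) * a i) • B i := by
      simp only [hB]; rw [← h1, h2]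
    have h4 := congrArg (fun x => ((B.repr x : Fin (n+2) →₀ ℂ) : Fin (n+2) → ℂ)) h3
    rw [B.repr_sum_self, B.repr_sum_self] at h4
    exact congrFun h4 j
  have hane : ∀ j, j ≠ 0 → a j = 0 := by
    intro j hj
    by_contra h
    have heq := mul_right_cancel₀ h (haeq j)
    have hnorm : ‖lamc j‖ < lam1 := lt_of_le_of_lt (hdom j hj) hgap
    rw [heq] at hnorm
    simp [abs_of_pos hlam1] at hnorm
  have hαu0 : αc = a 0 • u 0 := by
    rw [hαsum, Fintype.sum_eq_single 0 (fun j hj => by rw [hane j hj, zero_smul])]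
  have ha0 : a 0 ≠ 0 := by
    intro h
    have := congrFun hαu0 0
    rw [h, zero_smul] at this
    simp only [hαc, Pi.zero_apply] at this
    exact (hαpos 0).ne' (by exact_mod_cast this)
  -- normalization : a0 * D0 = 1
  have hdot : ∑ j, αc j * αc j = 1 := by
    have : ((∑ i, α i ^ 2 : ℝ) : ℂ) = 1 := by rw [hαnorm]; norm_num
    rw [← this]
    push_cast
    exact Finset.sum_congr rfl fun i _ => by ring
  set D : Fin (n+2) → ℂ := fun i => ∑ j, αc j * u i j with hD
  have hD0 : a 0 * D 0 = 1 := by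
    rw [← hdot, hD]
    simp only [Finset.mul_sum]
    refine Finset.sum_congr rfl fun j _ => ?_
    have : αc j = a 0 * u 0 j := by
      have := congrFun hαu0 j; simpa using this
    rw [this]; ring
  -- general formula for J
  have hJ : ∀ w : Fin (n+2) → ℂ,
      (((lam1⁻¹ • (M - Matrix.vecMulVec α α * M))).map (fun x => (x:ℂ))).mulVec w
      = ((lam1:ℂ)⁻¹) • (Mc.mulVec w - (∑ j, αc j * (Mc.mulVec w) j) • αc) := by
    intro w
    funext i
    simp only [Matrix.mulVec, dotProduct, Matrix.map_apply, Matrix.smul_apply,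
      Matrix.sub_apply, Matrix.mul_apply, Matrix.vecMulVec_apply, Pi.smul_apply,
      Pi.sub_apply, smul_eq_mul, hMc, hαc]
    push_cast
    have key : ∑ x, (∑ k, (α i:ℂ) * (α k) * (M k x)) * w x
        = (∑ k, (α k:ℂ) * ∑ x, (M k x:ℂ) * w x) * (α i:ℂ) := by
      calc ∑ x, (∑ k, (α i:ℂ) * (α k) * (M k x)) * w x
          = ∑ x, ∑ k, ((α i:ℂ) * (α k) * (M k x)) * w x := by
            exact Finset.sum_congr rfl fun x _ => Finset.sum_mul _ _ _
        _ = ∑ k, ∑ x, ((α i:ℂ) * (α k) * (M k x)) * w x := Finset.sum_comm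
        _ = ∑ k, ((α k:ℂ) * ∑ x, (M k x:ℂ) * w x) * (α i:ℂ) := by
            refine Finset.sum_congr rfl fun k _ => ?_
            rw [Finset.mul_sum, Finset.sum_mul]
            exact Finset.sum_congr rfl fun x _ => by ring
        _ = (∑ k, (α k:ℂ) * ∑ x, (M k x:ℂ) * w x) * (α i:ℂ) :=
            (Finset.sum_mul _ _ _).symm
    calc ∑ x, (lam1:ℂ)⁻¹ * ((M i x:ℂ) - ∑ k, (α i:ℂ) * (α k) * (M k x)) * w x
        = (lam1:ℂ)⁻¹ * ∑ x, ((M i x:ℂ) - ∑ k, (α i:ℂ) * (α k) * (M k x)) * w x := by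
          rw [Finset.mul_sum]
          exact Finset.sum_congr rfl fun x _ => by ring
      _ = (lam1:ℂ)⁻¹ * (∑ x, (M i x:ℂ) * w x
            - ∑ x, (∑ k, (α i:ℂ) * (α k) * (M k x)) * w x) := by
          rw [← Finset.sum_sub_distrib]
          congr 1
          exact Finset.sum_congr rfl fun x _ => by rw [sub_mul]
      _ = (lam1:ℂ)⁻¹ * (∑ x, (M i x:ℂ) * w x
            - (∑ k, (α k:ℂ) * ∑ x, (M k x:ℂ) * w x) * (α i:ℂ)) := by rw [key]
  -- the action of J on basis vectors
  set c : Fin (n+2) → ℂ := fun i => (lam1:ℂ)⁻¹ * lamc i with hc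
  set e : Fin (n+2) → ℂ := fun i => -(c i * D i * a 0) with he
  have hJu : ∀ i,
      (((lam1⁻¹ • (M - Matrix.vecMulVec α α * M))).map (fun x => (x:ℂ))).mulVec (u i)
      = c i • u i + (e i) • u 0 := by
    intro i
    rw [hJ (u i), heig i]
    have hdd : (∑ j, αc j * (lamc i • u i) j) = lamc i * D i := by
      rw [hD, Finset.mul_sum]
      exact Finset.sum_congr rfl fun j _ => by simp; ring
    rw [hdd, hαu0]
    funext k
    simp only [Pi.smul_apply, Pi.add_apply, Pi.sub_apply, smul_eq_mul, hc, he]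
    ring
  refine ⟨?_, by rw [div_lt_one hlam1]; exact hgap⟩
  intro μ v hv hμ
  set b : Fin (n+2) → ℂ := fun i => B.repr v i with hb
  have hvsum : v = ∑ i, b i • u i := by
    conv_lhs => rw [← B.sum_repr v]
    exact Finset.sum_congr rfl fun i _ => by rw [hB]
  set S : ℂ := ∑ i, b i * e i with hS
  set g : Fin (n+2) → ℂ := fun i => b i * c i + (if i = 0 then S else 0) with hg
  -- J v as a combination of the basis
  have hsum : (((lam1⁻¹ • (M - Matrix.vecMulVec α α * M))).map (fun x => (x:ℂ))).mulVec v
      = ∑ i, g i • u i := by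
    conv_lhs => rw [hvsum, ← Matrix.mulVecLin_apply, map_sum]
    have step : ∀ i : Fin (n+2), i ∈ Finset.univ →
        (((lam1⁻¹ • (M - Matrix.vecMulVec α α * M))).map (fun x => (x:ℂ))).mulVecLin
          (b i • u i) = (b i * c i) • u i + (b i * e i) • u 0 := by
      intro i _
      rw [LinearMap.map_smul, Matrix.mulVecLin_apply, hJu i, smul_add, smul_smul, smul_smul]
    rw [Finset.sum_congr rfl step, Finset.sum_add_distrib, ← Finset.sum_smul, ← hS]
    have hgs : ∑ i, g i • u i = (∑ i, (b i * c i) • u i) + S • u 0 := by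
      simp only [hg, add_smul, Finset.sum_add_distrib]
      congr 1
      rw [Fintype.sum_eq_single (0 : Fin (n+2)) (fun j hj => by rw [if_neg hj, zero_smul]),
        if_pos rfl]
    rw [hgs]
  -- compare coordinates
  have hcoord : ∀ k, g k = μ * b k := by
    have hμv : (μ • v : Fin (n+2) → ℂ) = ∑ i, (μ * b i) • u i := by
      rw [hvsum, Finset.smul_sum]
      exact Finset.sum_congr rfl fun i _ => by rw [smul_smul]
    have h3 : ∑ i, g i • B i = ∑ i, (μ * b i) • B i := by
      simp only [hB]; rw [← hsum, hμ, hμv]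
    have h4 := congrArg (fun x => ((B.repr x : Fin (n+2) →₀ ℂ) : Fin (n+2) → ℂ)) h3
    rw [B.repr_sum_self, B.repr_sum_self] at h4
    exact fun k => congrFun h4 k
  by_cases hcase : ∃ k : Fin (n+2), k ≠ 0 ∧ b k ≠ 0
  · obtain ⟨k, hk0, hbk⟩ := hcase
    have := hcoord k
    rw [hg] at this
    simp only [if_neg hk0, add_zero] at this
    have hμval : μ = c k := mul_right_cancel₀ hbk (by linear_combination -this)
    rw [hμval, hc]
    simp only [norm_mul, norm_inv, Complex.norm_real, Real.norm_eq_abs,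
      abs_of_pos hlam1]
    rw [inv_mul_eq_div]
    gcongr
    exact hdom k hk0
  · push_neg at hcase
    have hb0 : b 0 ≠ 0 := by
      intro h
      apply hv
      rw [hvsum]
      refine Finset.sum_eq_zero fun i _ => ?_
      by_cases hi : i = 0
      · rw [hi, h, zero_smul]
      · rw [hcase i hi, zero_smul]
    have h0 := hcoord 0
    rw [hg] at h0
    simp only [if_pos rfl] at h0
    have hS0 : S = b 0 * e 0 := by
      rw [hS]
      exact Fintype.sum_eq_single 0 (fun j hj => by rw [hcase j hj, zero_mul])
    have hc0 : c 0 = 1 := by rw [hc]; simp only [hlamc0]; field_simp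
    have he0 : e 0 = -1 := by
      rw [he]; simp only [hc0, one_mul]
      rw [mul_comm, hD0]
    rw [hS0, hc0, he0] at h0
    have : μ * b 0 = 0 := by rw [← h0]; norm_num
    have hμ0 : μ = 0 := by
      rcases mul_eq_zero.mp this with h | h
      · exact h
      · exact absurd h hb0
    rw [hμ0, norm_zero]
    positivity
end
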